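/- arXiv:2502.01875 — 2 statements merged into one kernel-verified Lean document; each statement's English description precedes it below -/
import Mathlib

section
/- For every complex number q with |q| < 1, ∑_{n≥1} q^n (−q^n; q)_∞ (q^{n+1}; q)_∞^2 (−q^3; q^3)_{n−1} = (−q^3; q^3)_∞ − (−q; q)_∞ (q; q)_∞^2. -/
/-- Finite q-Pochhammer symbol `(a; q)_n = ∏_{j=0}^{n-1} (1 - a q^j)`. -/
noncomputable def qPoch (q a : ℂ) (n : ℕ) : ℂ := ∏ j ∈ Finset.range n, (1 - a * q ^ j)

/-- Infinite q-Pochhammer symbol `(a; q)_∞ = ∏_{j=0}^{∞} (1 - a q^j)`. -/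
noncomputable def qPochInf (q a : ℂ) : ℂ := ∏' j : ℕ, (1 - a * q ^ j)

open Filter

private lemma aux_log_bound {r : ℝ} (hr : r < 1) {z : ℂ} (hz : ‖z‖ ≤ r) :
    ‖Complex.log (1 - z)‖ ≤ (r / (2 * (1 - r)) + 1) * ‖z‖ := by
  have h0 : (0:ℝ) ≤ r := le_trans (norm_nonneg z) hz
  have hz1 : ‖(-z)‖ < 1 := by rw [norm_neg]; exact lt_of_le_of_lt hz hr
  have h := Complex.norm_log_one_add_le hz1
  rw [show (1 : ℂ) + -z = 1 - z by ring, norm_neg] at h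
  have hsz : ‖z‖ < 1 := lt_of_le_of_lt hz hr
  have hu : (0:ℝ) ≤ (1 - ‖z‖)⁻¹ := inv_nonneg.2 (by linarith)
  have hv : (0:ℝ) ≤ (1 - r)⁻¹ := inv_nonneg.2 (by linarith)
  have h1 : (1-‖z‖)⁻¹ ≤ (1-r)⁻¹ := by
    apply inv_anti₀ (by linarith) (by linarith)
  have h2 : ‖z‖^2 * (1-‖z‖)⁻¹ ≤ (r * ‖z‖) * (1-r)⁻¹ := by
    apply mul_le_mul _ h1 hu (by positivity)
    nlinarith [norm_nonneg z]
  have h3 : (r / (2 * (1 - r)) + 1) * ‖z‖ = (r * ‖z‖) * (1-r)⁻¹ / 2 + ‖z‖ := by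
    have hne : (1 - r) ≠ 0 := sub_ne_zero.mpr (ne_of_gt hr)
    field_simp
  rw [h3]
  linarith

private lemma aux_small {q a : ℂ} (hq : ‖q‖ < 1) (ha : ‖a‖ ≤ ‖q‖) (j : ℕ) :
    ‖a * q ^ j‖ ≤ ‖q‖ := by
  rw [norm_mul, norm_pow]
  calc ‖a‖ * ‖q‖ ^ j ≤ ‖q‖ * 1 :=
        mul_le_mul ha (pow_le_one₀ (norm_nonneg q) hq.le) (by positivity) (norm_nonneg q)
    _ = ‖q‖ := mul_one _

private lemma aux_ne {q a : ℂ} (hq : ‖q‖ < 1) (ha : ‖a‖ ≤ ‖q‖) (j : ℕ) :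
    1 - a * q ^ j ≠ 0 := by
  intro h
  have h1 : a * q ^ j = 1 := by linear_combination -h
  have h2 := aux_small hq ha j
  rw [h1, norm_one] at h2
  exact absurd (lt_of_le_of_lt h2 hq) (lt_irrefl 1)

private lemma aux_summable_log {q a : ℂ} (hq : ‖q‖ < 1) (ha : ‖a‖ ≤ ‖q‖) :
    Summable fun j : ℕ => ‖Complex.log (1 - a * q ^ j)‖ := by
  have hgs : Summable (fun j : ℕ => (‖q‖ / (2 * (1 - ‖q‖)) + 1) * (‖a‖ * ‖q‖ ^ j)) :=
    ((summable_geometric_of_lt_one (norm_nonneg q) hq).mul_left ‖a‖).mul_left _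
  refine Summable.of_nonneg_of_le (fun j => norm_nonneg _) (fun j => ?_) hgs
  calc ‖Complex.log (1 - a * q ^ j)‖
      ≤ (‖q‖ / (2 * (1 - ‖q‖)) + 1) * ‖a * q ^ j‖ := aux_log_bound hq (aux_small hq ha j)
    _ = (‖q‖ / (2 * (1 - ‖q‖)) + 1) * (‖a‖ * ‖q‖ ^ j) := by rw [norm_mul, norm_pow]

private lemma aux_summable_log' {q a : ℂ} (hq : ‖q‖ < 1) (ha : ‖a‖ ≤ ‖q‖) :
    Summable fun j : ℕ => Complex.log (1 - a * q ^ j) :=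
  (aux_summable_log hq ha).of_norm

private lemma aux_norm_tsum_log {q a : ℂ} (hq : ‖q‖ < 1) (ha : ‖a‖ ≤ ‖q‖) :
    ‖∑' j : ℕ, Complex.log (1 - a * q ^ j)‖
      ≤ (‖q‖ / (2 * (1 - ‖q‖)) + 1) * ‖a‖ * (1 - ‖q‖)⁻¹ := by
  have h1 := norm_tsum_le_tsum_norm (aux_summable_log hq ha)
  have h2 : ∑' j : ℕ, ‖Complex.log (1 - a * q ^ j)‖
      ≤ ∑' j : ℕ, (‖q‖ / (2 * (1 - ‖q‖)) + 1) * (‖a‖ * ‖q‖ ^ j) := by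
    apply Summable.tsum_le_tsum _ (aux_summable_log hq ha)
      (((summable_geometric_of_lt_one (norm_nonneg q) hq).mul_left ‖a‖).mul_left _)
    intro j
    calc ‖Complex.log (1 - a * q ^ j)‖
        ≤ (‖q‖ / (2 * (1 - ‖q‖)) + 1) * ‖a * q ^ j‖ := aux_log_bound hq (aux_small hq ha j)
      _ = (‖q‖ / (2 * (1 - ‖q‖)) + 1) * (‖a‖ * ‖q‖ ^ j) := by rw [norm_mul, norm_pow]
  have h3 : ∑' j : ℕ, (‖q‖ / (2 * (1 - ‖q‖)) + 1) * (‖a‖ * ‖q‖ ^ j)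
      = (‖q‖ / (2 * (1 - ‖q‖)) + 1) * ‖a‖ * (1 - ‖q‖)⁻¹ := by
    rw [tsum_mul_left, tsum_mul_left, tsum_geometric_of_lt_one (norm_nonneg q) hq]
    ring
  rw [h3] at h2
  exact le_trans h1 h2

private lemma aux_exp {q a : ℂ} (hq : ‖q‖ < 1) (ha : ‖a‖ ≤ ‖q‖) :
    qPochInf q a = Complex.exp (∑' j : ℕ, Complex.log (1 - a * q ^ j)) := by
  have h := Complex.cexp_tsum_eq_tprod (f := fun j => 1 - a * q ^ j)
    (fun j => aux_ne hq ha j) (aux_summable_log' hq ha)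
  exact h.symm

private lemma aux_mult {q a : ℂ} (hq : ‖q‖ < 1) (ha : ‖a‖ ≤ ‖q‖) :
    Multipliable (fun j : ℕ => 1 - a * q ^ j) :=
  Complex.multipliable_of_summable_log (aux_summable_log' hq ha)

private lemma aux_norm_le {q a : ℂ} (hq : ‖q‖ < 1) (ha : ‖a‖ ≤ ‖q‖) :
    ‖qPochInf q a‖ ≤ Real.exp ((‖q‖ / (2 * (1 - ‖q‖)) + 1) * ‖q‖ * (1 - ‖q‖)⁻¹) := by
  rw [aux_exp hq ha]
  have hexp : ∀ S : ℂ, ‖Complex.exp S‖ ≤ Real.exp ‖S‖ := by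
    intro S
    rw [Complex.norm_exp]
    exact Real.exp_le_exp.2 (Complex.re_le_norm S)
  refine le_trans (hexp _) (Real.exp_le_exp.2 ?_)
  refine le_trans (aux_norm_tsum_log hq ha) ?_
  have hK : (0:ℝ) ≤ ‖q‖ / (2 * (1 - ‖q‖)) + 1 := by
    have h1 : (0:ℝ) < 1 - ‖q‖ := by linarith
    positivity
  have hv : (0:ℝ) ≤ (1 - ‖q‖)⁻¹ := inv_nonneg.2 (by linarith)
  exact mul_le_mul_of_nonneg_right (mul_le_mul_of_nonneg_left ha hK) hv

private lemma aux_recur {q a : ℂ} (hq : ‖q‖ < 1) (ha : ‖a‖ ≤ ‖q‖) :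
    qPochInf q a = (1 - a) * qPochInf q (a * q) := by
  have haq : ‖a * q‖ ≤ ‖q‖ := by
    rw [norm_mul]
    exact mul_le_of_le_one_left (norm_nonneg q) (le_trans ha hq.le)
  have hm : Multipliable (fun j : ℕ => 1 - (a * q) * q ^ j) := aux_mult hq haq
  have key : (fun n : ℕ => 1 - a * q ^ (n + 1)) = fun n : ℕ => 1 - (a * q) * q ^ n := by
    funext n; rw [pow_succ]; ring
  have h2 : Multipliable (fun n : ℕ => 1 - a * q ^ (n + 1)) := by rw [key]; exact hm
  rw [qPochInf, tprod_eq_zero_mul' (f := fun j : ℕ => 1 - a * q ^ j) h2]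
  congr 1
  · simp
  · rw [qPochInf]
    exact tprod_congr fun n => by rw [pow_succ]; ring

private lemma aux_tendsto_one {q : ℂ} (hq : ‖q‖ < 1) (a : ℕ → ℂ) (ha : ∀ n, ‖a n‖ ≤ ‖q‖)
    (h0 : Tendsto (fun n => ‖a n‖) atTop (nhds 0)) :
    Tendsto (fun n => qPochInf q (a n)) atTop (nhds 1) := by
  have heq : (fun n => qPochInf q (a n))
      = fun n => Complex.exp (∑' j : ℕ, Complex.log (1 - a n * q ^ j)) := by
    funext n; exact aux_exp hq (ha n)
  have hS : Tendsto (fun n => ∑' j : ℕ, Complex.log (1 - a n * q ^ j)) atTop (nhds 0) := by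
    apply squeeze_zero_norm (fun n => aux_norm_tsum_log hq (ha n))
    have h := (h0.const_mul (‖q‖ / (2 * (1 - ‖q‖)) + 1)).mul_const ((1 - ‖q‖)⁻¹)
    simpa using h
  have h := (Complex.continuous_exp.tendsto 0).comp hS
  rw [heq]
  simpa [Function.comp_def, Complex.exp_zero] using h

private lemma aux_qPoch_bound {q : ℂ} (hq : ‖q‖ < 1) (n : ℕ) :
    ‖qPoch (q ^ 3) (-q ^ 3) n‖ ≤ Real.exp ((1 - ‖q‖)⁻¹) := by
  rw [qPoch]
  calc ‖∏ j ∈ Finset.range n, (1 - (-q ^ 3) * (q ^ 3) ^ j)‖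
      = ∏ j ∈ Finset.range n, ‖(1 - (-q ^ 3) * (q ^ 3) ^ j)‖ := by
        simp only [norm_prod]
    _ ≤ ∏ j ∈ Finset.range n, Real.exp (‖q‖ ^ j) := by
        apply Finset.prod_le_prod (fun i _ => norm_nonneg _)
        intro j _
        have h1 : ‖(1 : ℂ) - (-q ^ 3) * (q ^ 3) ^ j‖ ≤ 1 + ‖q‖ ^ (3 * (j + 1)) := by
          calc ‖(1 : ℂ) - (-q ^ 3) * (q ^ 3) ^ j‖ ≤ ‖(1:ℂ)‖ + ‖(-q ^ 3) * (q ^ 3) ^ j‖ :=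
                norm_sub_le _ _
            _ = 1 + ‖q‖ ^ (3 * (j + 1)) := by
                have he : ‖(-q ^ 3) * (q ^ 3) ^ j‖ = ‖q‖ ^ (3 * (j + 1)) := by
                  rw [norm_mul, norm_neg, norm_pow, norm_pow, norm_pow, ← pow_mul, ← pow_add]
                  congr 1
                  ring
                rw [norm_one, he]
        have h2 : ‖q‖ ^ (3 * (j + 1)) ≤ ‖q‖ ^ j :=
          pow_le_pow_of_le_one (norm_nonneg q) hq.le (by omega)
        have h3 : 1 + ‖q‖ ^ j ≤ Real.exp (‖q‖ ^ j) := by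
          have := Real.add_one_le_exp (‖q‖ ^ j); linarith
        linarith
    _ = Real.exp (∑ j ∈ Finset.range n, ‖q‖ ^ j) := (Real.exp_sum _ _).symm
    _ ≤ Real.exp ((1 - ‖q‖)⁻¹) := by
        apply Real.exp_le_exp.2
        rw [← tsum_geometric_of_lt_one (norm_nonneg q) hq]
        exact Summable.sum_le_tsum _ (fun i _ => by positivity)
          (summable_geometric_of_lt_one (norm_nonneg q) hq)

private lemma aux_telescope {T F : ℕ → ℂ} {L : ℂ} (hT : Tendsto T atTop (nhds L))
    (hF : ∀ n, F n = T (n + 1) - T n) (hs : Summable F) :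
    ∑' n : ℕ, F n = L - T 0 := by
  have h1 := hs.hasSum.tendsto_sum_nat
  have h2 : Tendsto (fun N => ∑ i ∈ Finset.range N, F i) atTop (nhds (L - T 0)) := by
    have he : (fun N => ∑ i ∈ Finset.range N, F i) = fun N => T N - T 0 := by
      funext N
      rw [Finset.sum_congr rfl (fun i _ => hF i), Finset.sum_range_sub]
    rw [he]
    exact hT.sub_const (T 0)
  exact tendsto_nhds_unique h1 h2

private noncomputable def auxT (q : ℂ) (n : ℕ) : ℂ :=
  qPochInf q (-q ^ (n + 1)) * (qPochInf q (q ^ (n + 1))) ^ 2 * qPoch (q ^ 3) (-q ^ 3) n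

theorem thmAp_d (q : ℂ) (hq : ‖q‖ < 1) :
    ∑' n : ℕ, q ^ (n + 1) * qPochInf q (-q ^ (n + 1)) *
        (qPochInf q (q ^ (n + 2))) ^ 2 * qPoch (q ^ 3) (-q ^ 3) n
      = qPochInf (q ^ 3) (-q ^ 3) - qPochInf q (-q) * (qPochInf q q) ^ 2 := by
  have hq' : ‖q‖ < 1 := by exact hq
  have hpow : ∀ n : ℕ, ‖q ^ (n + 1)‖ ≤ ‖q‖ := by
    intro n
    rw [norm_pow]
    exact pow_le_of_le_one (norm_nonneg q) hq'.le (Nat.succ_ne_zero n)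
  have hpow' : ∀ n : ℕ, ‖-q ^ (n + 1)‖ ≤ ‖q‖ := fun n => by rw [norm_neg]; exact hpow n
  have hq3 : ‖q ^ 3‖ < 1 := by
    rw [norm_pow]
    exact pow_lt_one₀ (norm_nonneg q) hq' (by norm_num)
  have hq3' : ‖-q ^ 3‖ ≤ ‖q ^ 3‖ := le_of_eq (norm_neg _)
  -- the key telescoping identity
  have hKey : ∀ n : ℕ, q ^ (n + 1) * qPochInf q (-q ^ (n + 1)) *
      (qPochInf q (q ^ (n + 2))) ^ 2 * qPoch (q ^ 3) (-q ^ 3) n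
      = auxT q (n + 1) - auxT q n := by
    intro n
    have e2 : (q ^ (n + 1) : ℂ) * q = q ^ (n + 2) := (pow_succ q (n + 1)).symm
    have e1 : (-q ^ (n + 1)) * q = -q ^ (n + 2) := by rw [neg_mul, e2]
    have f1 : qPochInf q (-q ^ (n + 1)) = (1 + q ^ (n + 1)) * qPochInf q (-q ^ (n + 2)) := by
      rw [aux_recur hq' (hpow' n), e1, sub_neg_eq_add]
    have f2 : qPochInf q (q ^ (n + 1)) = (1 - q ^ (n + 1)) * qPochInf q (q ^ (n + 2)) := by
      rw [aux_recur hq' (hpow n), e2]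
    have h3 : ((q : ℂ) ^ (n + 1)) ^ 3 = q ^ 3 * (q ^ 3) ^ n := by
      rw [← pow_mul, ← pow_mul, ← pow_add]
      congr 1
      ring
    have f3 : qPoch (q ^ 3) (-q ^ 3) (n + 1)
        = qPoch (q ^ 3) (-q ^ 3) n * (1 + (q ^ (n + 1)) ^ 3) := by
      simp only [qPoch, Finset.prod_range_succ]
      congr 1
      rw [h3]
      ring
    have hTT : auxT q (n + 1) = qPochInf q (-q ^ (n + 2)) * (qPochInf q (q ^ (n + 2))) ^ 2 *
        qPoch (q ^ 3) (-q ^ 3) (n + 1) := rfl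
    rw [hTT, f3]
    simp only [auxT]
    rw [f1, f2]
    ring
  -- tendsto of auxT
  have t1 : Tendsto (fun n => qPochInf q (-q ^ (n + 1))) atTop (nhds 1) := by
    apply aux_tendsto_one hq' _ hpow'
    have h : Tendsto (fun n : ℕ => ‖q‖ ^ (n + 1)) atTop (nhds 0) :=
      (tendsto_pow_atTop_nhds_zero_of_lt_one (norm_nonneg q) hq').comp (tendsto_add_atTop_nat 1)
    simpa [norm_pow] using h
  have t2 : Tendsto (fun n => qPochInf q (q ^ (n + 1))) atTop (nhds 1) := by
    apply aux_tendsto_one hq' _ hpow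
    have h : Tendsto (fun n : ℕ => ‖q‖ ^ (n + 1)) atTop (nhds 0) :=
      (tendsto_pow_atTop_nhds_zero_of_lt_one (norm_nonneg q) hq').comp (tendsto_add_atTop_nat 1)
    simpa [norm_pow] using h
  have t3 : Tendsto (fun n => qPoch (q ^ 3) (-q ^ 3) n) atTop (nhds (qPochInf (q ^ 3) (-q ^ 3))) := by
    have hm : Multipliable (fun j : ℕ => 1 - (-q ^ 3) * (q ^ 3) ^ j) := aux_mult hq3 hq3'
    have h := hm.hasProd.tendsto_prod_nat
    simpa only [qPoch, qPochInf] using h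
  have hTend : Tendsto (auxT q) atTop (nhds (qPochInf (q ^ 3) (-q ^ 3))) := by
    have h := (t1.mul (t2.pow 2)).mul t3
    simp only [one_mul, one_pow] at h
    exact h
  -- summability
  have hSum : Summable (fun n : ℕ => q ^ (n + 1) * qPochInf q (-q ^ (n + 1)) *
      (qPochInf q (q ^ (n + 2))) ^ 2 * qPoch (q ^ 3) (-q ^ 3) n) := by
    set E := (‖q‖ / (2 * (1 - ‖q‖)) + 1) * ‖q‖ * (1 - ‖q‖)⁻¹ with hE
    apply Summable.of_norm_bounded
      (g := fun n => Real.exp E * (Real.exp E) ^ 2 * Real.exp ((1 - ‖q‖)⁻¹) * ‖q‖ ^ n)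
    · exact (summable_geometric_of_lt_one (norm_nonneg q) hq').mul_left _
    · intro n
      have b1 : ‖qPochInf q (-q ^ (n + 1))‖ ≤ Real.exp E := aux_norm_le hq' (hpow' n)
      have b2 : ‖qPochInf q (q ^ (n + 2))‖ ≤ Real.exp E := aux_norm_le hq' (hpow (n + 1))
      have b3 : ‖qPoch (q ^ 3) (-q ^ 3) n‖ ≤ Real.exp ((1 - ‖q‖)⁻¹) := aux_qPoch_bound hq' n
      have b0 : ‖q‖ ^ (n + 1) ≤ ‖q‖ ^ n :=
        pow_le_pow_of_le_one (norm_nonneg q) hq'.le (Nat.le_succ n)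
      have hEpos : (0:ℝ) ≤ Real.exp E := (Real.exp_pos E).le
      have step1 : ‖q‖ ^ (n + 1) * ‖qPochInf q (-q ^ (n + 1))‖ ≤ ‖q‖ ^ n * Real.exp E :=
        mul_le_mul b0 b1 (norm_nonneg _) (by positivity)
      have step2 : ‖qPochInf q (q ^ (n + 2))‖ ^ 2 ≤ (Real.exp E) ^ 2 :=
        pow_le_pow_left₀ (norm_nonneg _) b2 2
      have step3 : ‖q‖ ^ (n + 1) * ‖qPochInf q (-q ^ (n + 1))‖ *
          ‖qPochInf q (q ^ (n + 2))‖ ^ 2 ≤ ‖q‖ ^ n * Real.exp E * (Real.exp E) ^ 2 :=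
        mul_le_mul step1 step2 (by positivity) (by positivity)
      have step4 : ‖q‖ ^ (n + 1) * ‖qPochInf q (-q ^ (n + 1))‖ *
          ‖qPochInf q (q ^ (n + 2))‖ ^ 2 * ‖qPoch (q ^ 3) (-q ^ 3) n‖
          ≤ ‖q‖ ^ n * Real.exp E * (Real.exp E) ^ 2 * Real.exp ((1 - ‖q‖)⁻¹) :=
        mul_le_mul step3 b3 (norm_nonneg _) (by positivity)
      calc ‖q ^ (n + 1) * qPochInf q (-q ^ (n + 1)) *
            (qPochInf q (q ^ (n + 2))) ^ 2 * qPoch (q ^ 3) (-q ^ 3) n‖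
          = ‖q‖ ^ (n + 1) * ‖qPochInf q (-q ^ (n + 1))‖ *
            ‖qPochInf q (q ^ (n + 2))‖ ^ 2 * ‖qPoch (q ^ 3) (-q ^ 3) n‖ := by
            rw [norm_mul, norm_mul, norm_mul, norm_pow, norm_pow]
        _ ≤ ‖q‖ ^ n * Real.exp E * (Real.exp E) ^ 2 * Real.exp ((1 - ‖q‖)⁻¹) := step4
        _ = Real.exp E * (Real.exp E) ^ 2 * Real.exp ((1 - ‖q‖)⁻¹) * ‖q‖ ^ n := by ring
  have hfinal := aux_telescope hTend hKey hSum
  rw [hfinal]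
  congr 1
  simp [auxT, qPoch, pow_one]
end

section
/- For every complex number q with |q| < 1, ∑_{n≥1} q^n / [ (q^{n+1}; q)_∞ (−q^n; q)_∞^2 (q^3; q^3)_n ] = 1/(q^3; q^3)_∞ − (q; q^2)_∞ / (q^2; q^2)_∞. -/
open Complex Finset Filter Topology

lemma summable_aq {q : ℂ} (hq : ‖q‖ < 1) (a : ℂ) : Summable (fun j : ℕ => a * q ^ j) :=
  (summable_geometric_of_norm_lt_one hq).mul_left a

lemma factor_ne {q a : ℂ} (hq : ‖q‖ < 1) (ha : ‖a‖ < 1) (j : ℕ) : 1 - a * q ^ j ≠ 0 := by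
  intro h
  have h1 : ‖a * q ^ j‖ < 1 := by
    calc ‖a * q ^ j‖ = ‖a‖ * ‖q‖ ^ j := by simp [norm_mul, norm_pow]
    _ ≤ ‖a‖ * 1 := by
        have : ‖q‖ ^ j ≤ 1 := pow_le_one₀ (norm_nonneg q) hq.le
        exact mul_le_mul_of_nonneg_left this (norm_nonneg a)
    _ < 1 := by simpa using ha
  have he : a * q ^ j = 1 := by linear_combination -h
  rw [he] at h1; simp at h1

lemma hasProd_qPochInf {q a : ℂ} (hq : ‖q‖ < 1) (ha : ‖a‖ < 1) :
    HasProd (fun j : ℕ => 1 - a * q ^ j)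
      (Complex.exp (∑' j : ℕ, Complex.log (1 - a * q ^ j))) := by
  have hlog : Summable fun j : ℕ => Complex.log (1 - a * q ^ j) :=
    (summable_aq hq a).clog_one_sub
  have h2 := hlog.hasSum.cexp
  have hfun : (fun j : ℕ => Complex.exp (Complex.log (1 - a * q ^ j)))
      = fun j : ℕ => 1 - a * q ^ j :=
    funext fun j => Complex.exp_log (factor_ne hq ha j)
  rw [Function.comp_def, hfun] at h2
  exact h2

lemma qPochInf_eq_exp {q a : ℂ} (hq : ‖q‖ < 1) (ha : ‖a‖ < 1) :
    qPochInf q a = Complex.exp (∑' j : ℕ, Complex.log (1 - a * q ^ j)) :=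
  (hasProd_qPochInf hq ha).tprod_eq

lemma qPochInf_ne_zero {q a : ℂ} (hq : ‖q‖ < 1) (ha : ‖a‖ < 1) : qPochInf q a ≠ 0 := by
  rw [qPochInf_eq_exp hq ha]; exact Complex.exp_ne_zero _

lemma multipliable_qPochInf {q a : ℂ} (hq : ‖q‖ < 1) (ha : ‖a‖ < 1) :
    Multipliable (fun j : ℕ => 1 - a * q ^ j) :=
  (hasProd_qPochInf hq ha).multipliable

lemma qPoch_ne_zero {q a : ℂ} (hq : ‖q‖ < 1) (ha : ‖a‖ < 1) (n : ℕ) : qPoch q a n ≠ 0 :=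
  Finset.prod_ne_zero_iff.2 fun j _ => factor_ne hq ha j

lemma qPoch_mul_tail {q a : ℂ} (hq : ‖q‖ < 1) (ha : ‖a‖ < 1) (n : ℕ) :
    qPoch q a n * qPochInf q (a * q ^ n) = qPochInf q a := by
  have hm : Multipliable fun i : ℕ => 1 - a * q ^ (i + n) := by
    have := multipliable_qPochInf hq (a := a * q ^ n)
      (lt_of_le_of_lt (by
        calc ‖a * q ^ n‖ = ‖a‖ * ‖q‖ ^ n := by simp [norm_mul, norm_pow]
        _ ≤ ‖a‖ * 1 := mul_le_mul_of_nonneg_left (pow_le_one₀ (norm_nonneg q) hq.le) (norm_nonneg a)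
        _ = ‖a‖ := mul_one _) ha)
    refine this.congr fun i => ?_
    rw [pow_add]; ring
  have := Multipliable.prod_mul_tprod_nat_mul' (f := fun j : ℕ => 1 - a * q ^ j) (k := n) hm
  rw [qPoch, qPochInf, qPochInf, ← this]
  congr 1
  refine tprod_congr fun i => ?_
  rw [pow_add]; ring

lemma tendsto_qPoch {q a : ℂ} (hq : ‖q‖ < 1) (ha : ‖a‖ < 1) :
    Tendsto (fun n => qPoch q a n) atTop (𝓝 (qPochInf q a)) :=
  (hasProd_qPochInf hq ha).tendsto_prod_nat.congr' (by
    filter_upwards with n; rfl) |>.congr' (by filter_upwards with n; rfl) |>.mono_right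
    (by rw [qPochInf_eq_exp hq ha])

lemma aux_exp_le {r t : ℝ} (h0 : 0 ≤ t) (h1 : t ≤ r) (hr : r < 1) :
    Real.exp (-(t / (1 - r))) ≤ 1 - t := by
  have hr0 : 0 < 1 - r := by linarith
  have hu : 0 ≤ t / (1 - r) := div_nonneg h0 hr0.le
  have h2 : 1 + t / (1 - r) ≤ Real.exp (t / (1 - r)) := by
    have := Real.add_one_le_exp (t / (1 - r)); linarith
  have hpos : 0 < 1 + t / (1 - r) := by linarith
  have h4 : 1 ≤ (1 - t) * (1 + t / (1 - r)) := by
    have he : (1 - t) * (1 + t / (1 - r)) - 1 = t * (r - t) / (1 - r) := by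
      field_simp; ring
    have : 0 ≤ t * (r - t) / (1 - r) :=
      div_nonneg (mul_nonneg h0 (by linarith)) hr0.le
    linarith
  have h5 : (1 + t / (1 - r))⁻¹ ≤ 1 - t := by
    rw [inv_le_iff_one_le_mul₀ hpos]; linarith [h4]
  calc Real.exp (-(t / (1 - r))) = (Real.exp (t / (1 - r)))⁻¹ := Real.exp_neg _
    _ ≤ (1 + t / (1 - r))⁻¹ := by
        exact inv_anti₀ hpos h2
    _ ≤ 1 - t := h5

lemma qPoch_norm_upper {q a : ℂ} (hq : ‖q‖ < 1) (n : ℕ) :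
    ‖qPoch q a n‖ ≤ Real.exp (‖a‖ / (1 - ‖q‖)) := by
  have hr0 : 0 < 1 - ‖q‖ := by linarith
  rw [qPoch, norm_prod]
  calc (∏ j ∈ Finset.range n, ‖1 - a * q ^ j‖)
      ≤ ∏ j ∈ Finset.range n, Real.exp (‖a‖ * ‖q‖ ^ j) := by
        refine Finset.prod_le_prod (fun j _ => norm_nonneg _) (fun j _ => ?_)
        calc ‖1 - a * q ^ j‖ ≤ ‖(1:ℂ)‖ + ‖a * q ^ j‖ := norm_sub_le _ _
          _ = 1 + ‖a‖ * ‖q‖ ^ j := by simp [norm_mul, norm_pow]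
          _ ≤ Real.exp (‖a‖ * ‖q‖ ^ j) := by
              have := Real.add_one_le_exp (‖a‖ * ‖q‖ ^ j); linarith
    _ = Real.exp (∑ j ∈ Finset.range n, ‖a‖ * ‖q‖ ^ j) := (Real.exp_sum _ _).symm
    _ ≤ Real.exp (‖a‖ / (1 - ‖q‖)) := by
        refine Real.exp_le_exp.2 ?_
        rw [← Finset.mul_sum]
        rw [div_eq_mul_inv]
        refine mul_le_mul_of_nonneg_left ?_ (norm_nonneg a)
        have hs : Summable (fun j : ℕ => ‖q‖ ^ j) :=
          summable_geometric_of_lt_one (norm_nonneg q) hq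
        calc (∑ j ∈ Finset.range n, ‖q‖ ^ j) ≤ ∑' j : ℕ, ‖q‖ ^ j :=
              Summable.sum_le_tsum _ (fun j _ => pow_nonneg (norm_nonneg q) j) hs
          _ = (1 - ‖q‖)⁻¹ := tsum_geometric_of_lt_one (norm_nonneg q) hq

lemma qPoch_norm_lower {q : ℂ} (hq : ‖q‖ < 1) (n : ℕ) :
    Real.exp (-((‖q‖ / (1 - ‖q‖)) / (1 - ‖q‖))) ≤ ‖qPoch q q n‖ := by
  have hr0 : 0 < 1 - ‖q‖ := by linarith
  rw [qPoch, norm_prod]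
  have key : ∀ j : ℕ, Real.exp (-(‖q‖ ^ (j + 1) / (1 - ‖q‖))) ≤ ‖1 - q * q ^ j‖ := by
    intro j
    have h1 : ‖q‖ ^ (j + 1) ≤ ‖q‖ := pow_le_of_le_one (norm_nonneg q) hq.le (Nat.succ_ne_zero j)
    have h0 : (0:ℝ) ≤ ‖q‖ ^ (j + 1) := pow_nonneg (norm_nonneg q) _
    calc Real.exp (-(‖q‖ ^ (j + 1) / (1 - ‖q‖))) ≤ 1 - ‖q‖ ^ (j + 1) :=
          aux_exp_le h0 h1 hq
      _ ≤ ‖1 - q * q ^ j‖ := by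
          have : ‖q * q ^ j‖ = ‖q‖ ^ (j + 1) := by
            rw [norm_mul, norm_pow]; ring
          calc 1 - ‖q‖ ^ (j+1) = ‖(1:ℂ)‖ - ‖q * q ^ j‖ := by rw [this]; simp
            _ ≤ ‖1 - q * q ^ j‖ := norm_sub_norm_le _ _
  calc Real.exp (-((‖q‖ / (1 - ‖q‖)) / (1 - ‖q‖)))
      ≤ Real.exp (∑ j ∈ Finset.range n, -(‖q‖ ^ (j + 1) / (1 - ‖q‖))) := by
        refine Real.exp_le_exp.2 ?_
        have hs : Summable (fun j : ℕ => ‖q‖ ^ j) :=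
          summable_geometric_of_lt_one (norm_nonneg q) hq
        have hsum : (∑ j ∈ Finset.range n, ‖q‖ ^ (j + 1)) ≤ ‖q‖ / (1 - ‖q‖) := by
          have e1 : (∑ j ∈ Finset.range n, ‖q‖ ^ (j + 1))
              = ‖q‖ * ∑ j ∈ Finset.range n, ‖q‖ ^ j := by
            rw [Finset.mul_sum]; exact Finset.sum_congr rfl fun j _ => by ring
          rw [e1, div_eq_mul_inv]
          refine mul_le_mul_of_nonneg_left ?_ (norm_nonneg q)
          calc (∑ j ∈ Finset.range n, ‖q‖ ^ j) ≤ ∑' j : ℕ, ‖q‖ ^ j :=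
                Summable.sum_le_tsum _ (fun j _ => pow_nonneg (norm_nonneg q) j) hs
            _ = (1 - ‖q‖)⁻¹ := tsum_geometric_of_lt_one (norm_nonneg q) hq
        rw [Finset.sum_neg_distrib, neg_le_neg_iff, ← Finset.sum_div]
        gcongr
    _ ≤ ∏ j ∈ Finset.range n, ‖1 - q * q ^ j‖ := by
        rw [Real.exp_sum]
        exact Finset.prod_le_prod (fun j _ => (Real.exp_pos _).le) (fun j _ => key j)

theorem thmA2_a (q : ℂ) (hq : ‖q‖ < 1) :
    ∑' n : ℕ, q ^ (n + 1) /
        (qPochInf q (q ^ (n + 2)) * (qPochInf q (-q ^ (n + 1))) ^ 2 *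
          qPoch (q ^ 3) (q ^ 3) (n + 1))
      = 1 / qPochInf (q ^ 3) (q ^ 3) - qPochInf (q ^ 2) q / qPochInf (q ^ 2) (q ^ 2) := by
  have hq' : ‖q‖ < 1 := hq
  have hq2 : ‖q ^ 2‖ < 1 := by rw [norm_pow]; exact pow_lt_one₀ (norm_nonneg q) hq' two_ne_zero
  have hq3 : ‖q ^ 3‖ < 1 := by rw [norm_pow]; exact pow_lt_one₀ (norm_nonneg q) hq' three_ne_zero
  have hnq : ‖-q‖ < 1 := by rwa [norm_neg]
  set P1 := qPochInf q q with hP1def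
  set P2 := qPochInf q (-q) with hP2def
  set P3 := qPochInf (q ^ 3) (q ^ 3) with hP3def
  set Q1 := qPochInf (q ^ 2) q with hQ1def
  set Q2 := qPochInf (q ^ 2) (q ^ 2) with hQ2def
  have hP1 : P1 ≠ 0 := qPochInf_ne_zero hq' hq'
  have hP2 : P2 ≠ 0 := qPochInf_ne_zero hq' hnq
  have hP3 : P3 ≠ 0 := qPochInf_ne_zero hq3 hq3
  have hQ2 : Q2 ≠ 0 := qPochInf_ne_zero hq2 hq2
  set f : ℕ → ℂ := fun n => qPoch q q n with hfdef
  set g : ℕ → ℂ := fun n => qPoch q (-q) n with hgdef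
  set h : ℕ → ℂ := fun n => qPoch (q ^ 3) (q ^ 3) n with hhdef
  have hf0 : ∀ n, f n ≠ 0 := qPoch_ne_zero hq' hq'
  have hg0 : ∀ n, g n ≠ 0 := qPoch_ne_zero hq' hnq
  have hh0 : ∀ n, h n ≠ 0 := qPoch_ne_zero hq3 hq3
  -- tail formulas
  have htail1 : ∀ n : ℕ, qPochInf q (q ^ (n + 2)) = P1 / f (n + 1) := by
    intro n
    have h0 := qPoch_mul_tail hq' hq' (n + 1)
    have e : q * q ^ (n + 1) = q ^ (n + 2) := by ring
    rw [e] at h0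
    rw [eq_div_iff (hf0 (n + 1)), mul_comm, hP1def, ← h0]
  have htail2 : ∀ n : ℕ, qPochInf q (-q ^ (n + 1)) = P2 / g n := by
    intro n
    have h0 := qPoch_mul_tail hq' hnq n
    have e : -q * q ^ n = -q ^ (n + 1) := by ring
    rw [e] at h0
    rw [eq_div_iff (hg0 n), mul_comm, hP2def, ← h0]
  -- the summand
  set term : ℕ → ℂ := fun n => q ^ (n + 1) /
      (qPochInf q (q ^ (n + 2)) * (qPochInf q (-q ^ (n + 1))) ^ 2 *
        qPoch (q ^ 3) (q ^ 3) (n + 1)) with htermdef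
  have hterm : ∀ n : ℕ, term n =
      q ^ (n + 1) * f (n + 1) * (g n) ^ 2 / (P1 * P2 ^ 2 * h (n + 1)) := by
    intro n
    rw [htermdef]
    simp only []
    rw [htail1 n, htail2 n]
    have : qPoch (q ^ 3) (q ^ 3) (n + 1) = h (n + 1) := rfl
    rw [this]
    field_simp
  -- telescoping function
  set F : ℕ → ℂ := fun n => f n * (g n) ^ 2 / (P1 * P2 ^ 2 * h n) with hFdef
  have hFdiff : ∀ n : ℕ, term n = F (n + 1) - F n := by
    intro n
    rw [hterm n, hFdef]
    simp only []
    have hf' : f (n + 1) = f n * (1 - q * q ^ n) := Finset.prod_range_succ _ n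
    have hg' : g (n + 1) = g n * (1 - (-q) * q ^ n) := Finset.prod_range_succ _ n
    have hh' : h (n + 1) = h n * (1 - q ^ 3 * (q ^ 3) ^ n) := Finset.prod_range_succ _ n
    rw [hf', hg', hh']
    have hx : (1 : ℂ) - q ^ 3 * (q ^ 3) ^ n ≠ 0 := factor_ne hq3 hq3 n
    field_simp [hP1, hP2, hh0 n, hx]
    ring
  -- summability
  have hsummable : Summable term := by
    set r := ‖q‖ with hrdef
    set C1 := Real.exp (r / (1 - r)) with hC1def
    set c3 := Real.exp (-((‖q ^ 3‖ / (1 - ‖q ^ 3‖)) / (1 - ‖q ^ 3‖))) with hc3def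
    have hc3pos : 0 < c3 := Real.exp_pos _
    have hden : 0 < ‖P1‖ * ‖P2‖ ^ 2 * c3 :=
      mul_pos (mul_pos (norm_pos_iff.2 hP1) (pow_pos (norm_pos_iff.2 hP2) 2)) hc3pos
    set K := C1 * C1 ^ 2 / (‖P1‖ * ‖P2‖ ^ 2 * c3) with hKdef
    have hbound : ∀ n : ℕ, ‖term n‖ ≤ K * r ^ (n + 1) := by
      intro n
      rw [hterm n]
      rw [norm_div, norm_mul, norm_mul, norm_pow, norm_pow, norm_mul, norm_mul, norm_pow]
      have h1 : ‖f (n + 1)‖ ≤ C1 := qPoch_norm_upper hq' (n + 1)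
      have h2 : ‖g n‖ ≤ C1 := by
        have := qPoch_norm_upper (a := -q) hq' n
        rwa [norm_neg] at this
      have h3 : c3 ≤ ‖h (n + 1)‖ := qPoch_norm_lower hq3 (n + 1)
      have hC1pos : 0 < C1 := Real.exp_pos _
      have hnum : ‖q‖ ^ (n + 1) * ‖f (n + 1)‖ * ‖g n‖ ^ 2 ≤ r ^ (n + 1) * (C1 * C1 ^ 2) := by
        rw [hrdef]
        calc ‖q‖ ^ (n + 1) * ‖f (n + 1)‖ * ‖g n‖ ^ 2
            ≤ ‖q‖ ^ (n + 1) * C1 * C1 ^ 2 := by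
              gcongr
          _ = ‖q‖ ^ (n + 1) * (C1 * C1 ^ 2) := by ring
      calc ‖q‖ ^ (n + 1) * ‖f (n + 1)‖ * ‖g n‖ ^ 2 / (‖P1‖ * ‖P2‖ ^ 2 * ‖h (n + 1)‖)
          ≤ r ^ (n + 1) * (C1 * C1 ^ 2) / (‖P1‖ * ‖P2‖ ^ 2 * c3) := by
            refine div_le_div₀ (by positivity) hnum hden ?_
            gcongr
        _ = K * r ^ (n + 1) := by rw [hKdef]; ring
    refine Summable.of_norm_bounded ?_ hbound
    have : Summable (fun n : ℕ => r ^ n) := summable_geometric_of_lt_one (norm_nonneg q) hq'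
    have h4 : Summable (fun n : ℕ => (K * r) * r ^ n) := this.mul_left _
    refine h4.congr fun n => ?_
    rw [pow_succ]; ring
  -- partial sums telescope
  have hps : ∀ N : ℕ, ∑ n ∈ Finset.range N, term n = F N - F 0 := by
    intro N
    rw [Finset.sum_congr rfl fun n _ => hFdiff n]
    exact Finset.sum_range_sub F N
  -- limit
  have hFlim : Tendsto F atTop (𝓝 (P1 * P2 ^ 2 / (P1 * P2 ^ 2 * P3))) := by
    have hnum : Tendsto (fun n => f n * g n ^ 2) atTop (𝓝 (P1 * P2 ^ 2)) :=
      (tendsto_qPoch hq' hq').mul ((tendsto_qPoch hq' hnq).pow 2)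
    have hden : Tendsto (fun n => P1 * P2 ^ 2 * h n) atTop (𝓝 (P1 * P2 ^ 2 * P3)) :=
      tendsto_const_nhds.mul (tendsto_qPoch hq3 hq3)
    exact hnum.div hden (by
      exact mul_ne_zero (mul_ne_zero hP1 (pow_ne_zero 2 hP2)) hP3)
  have hF0 : F 0 = 1 / (P1 * P2 ^ 2) := by
    rw [hFdef]
    simp [hfdef, hgdef, hhdef, qPoch]
  have hhs : HasSum term (P1 * P2 ^ 2 / (P1 * P2 ^ 2 * P3) - F 0) := by
    rw [hsummable.hasSum_iff_tendsto_nat]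
    have := hFlim.sub (tendsto_const_nhds (x := F 0))
    refine this.congr fun N => (hps N).symm
  rw [hhs.tsum_eq, hF0]
  -- final algebra using product identities
  have hA : P1 * P2 = Q2 := by
    have m1 : Multipliable fun j : ℕ => 1 - q * q ^ j := multipliable_qPochInf hq' hq'
    have m2 : Multipliable fun j : ℕ => 1 - (-q) * q ^ j := multipliable_qPochInf hq' hnq
    rw [hP1def, hP2def, hQ2def, qPochInf, qPochInf, qPochInf, ← Multipliable.tprod_mul m1 m2]
    exact tprod_congr fun j => by ring
  have hB : P1 = Q1 * Q2 := by
    have he : Multipliable fun k : ℕ => 1 - q * q ^ (2 * k) := by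
      refine (multipliable_qPochInf hq2 hq').congr fun k => ?_
      ring
    have ho : Multipliable fun k : ℕ => 1 - q * q ^ (2 * k + 1) := by
      refine (multipliable_qPochInf hq2 hq2).congr fun k => ?_
      ring
    have := tprod_even_mul_odd (f := fun j : ℕ => 1 - q * q ^ j) he ho
    rw [hP1def, hQ1def, hQ2def, qPochInf, qPochInf, qPochInf, ← this]
    congr 1
    · exact tprod_congr fun k => by ring
    · exact tprod_congr fun k => by ring
  have hQ1P2 : Q1 * P2 = 1 := by
    apply mul_left_cancel₀ hP1
    calc P1 * (Q1 * P2) = Q1 * (P1 * P2) := by ring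
      _ = Q1 * Q2 := by rw [hA]
      _ = P1 := hB.symm
      _ = P1 * 1 := (mul_one P1).symm
  have e1 : P1 * P2 ^ 2 / (P1 * P2 ^ 2 * P3) = 1 / P3 := by
    rw [div_eq_div_iff (by exact mul_ne_zero (mul_ne_zero hP1 (pow_ne_zero 2 hP2)) hP3) hP3]
    ring
  have e2 : Q1 / Q2 = 1 / (P1 * P2 ^ 2) := by
    rw [← hA, div_eq_div_iff (mul_ne_zero hP1 hP2)
      (mul_ne_zero hP1 (pow_ne_zero 2 hP2))]
    linear_combination (P1 * P2) * hQ1P2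
  rw [e1, e2]
end
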